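/- 𝔡 ≤ cov(B_M): every family of meager downward-closed subsets of [ω]^ω whose union contains every infinite, co-infinite subset of ω has cardinality at least 𝔡. -/

import Mathlib

open Set Cardinal MeasureTheory

/-- The characteristic function of a set of naturals, as a point of Cantor space `2^ω`. -/
noncomputable def chi (x : Set ℕ) : ℕ → Bool := fun n => @decide (n ∈ x) (Classical.dec _)

/-- `[ω]^ω`: the collection of infinite subsets of ω. -/
def InfSets : Set (Set ℕ) := {x : Set ℕ | x.Infinite}

/-- `X ⊆ [ω]^ω` is downward closed for almost-inclusion `x ≤ y ↔ (x \ y).Finite`. -/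
def DownClosed (X : Set (Set ℕ)) : Prop :=
  ∀ y ∈ X, ∀ x : Set ℕ, x.Infinite → (x \ y).Finite → x ∈ X

/-- `X` is meager as a subset of Cantor space `2^ω` (product topology on `ℕ → Bool`). -/
def MeagerSet (X : Set (Set ℕ)) : Prop := IsMeagre (chi '' X)

/-- A partition of ω into consecutive finite intervals `I n = [e n, e (n+1))`. -/
structure IntervalPartition where
  e : ℕ → ℕ
  zero : e 0 = 0
  mono : StrictMono e

/-- The `n`-th interval of an interval partition. -/
def IntervalPartition.I (P : IntervalPartition) (n : ℕ) : Set ℕ :=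
  Set.Ico (P.e n) (P.e (n + 1))

/-- `X ⊆ [ω]^ω` is groupwise dense: downward closed, and for every partition of ω into
finite intervals, the union of some infinitely many of the intervals belongs to `X`. -/
def GroupwiseDense (X : Set (Set ℕ)) : Prop :=
  X ⊆ InfSets ∧ DownClosed X ∧
    ∀ P : IntervalPartition, ∃ A : Set ℕ, A.Infinite ∧ (⋃ n ∈ A, P.I n) ∈ X

/-- `g` eventually majorizes `f`. -/
def EvMaj (f g : ℕ → ℕ) : Prop := ∀ᶠ k in Filter.atTop, f k ≤ g k

/-- `M(Π)`: the infinite subsets of ω including only finitely many intervals of `Π`. -/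
def MSet (P : IntervalPartition) : Set (Set ℕ) :=
  {x : Set ℕ | x.Infinite ∧ {n : ℕ | P.I n ⊆ x}.Finite}

/-- The index `n` of the interval `I n` of `P` containing `k`. -/
def idx (P : IntervalPartition) (k : ℕ) : ℕ := Nat.findGreatest (fun n => P.e n ≤ k) k

/-- `F_Π(k)`: the largest element of `I (n+2)`, where `k ∈ I n`. -/
def FPart (P : IntervalPartition) (k : ℕ) : ℕ := P.e (idx P k + 3) - 1

/-- The groupwise density number 𝔤. -/
noncomputable def gNum : Cardinal :=
  sInf {c : Cardinal | ∃ S : Set (Set (Set ℕ)), (∀ G ∈ S, GroupwiseDense G) ∧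
    #S = c ∧ InfSets ∩ ⋂₀ S = ∅}

/-- The bounding number 𝔟. -/
noncomputable def bNum : Cardinal :=
  sInf {c : Cardinal | ∃ F : Set (ℕ → ℕ), #F = c ∧ ∀ g : ℕ → ℕ, ∃ f ∈ F, ¬ EvMaj f g}

/-- The dominating number 𝔡. -/
noncomputable def dNum : Cardinal :=
  sInf {c : Cardinal | ∃ F : Set (ℕ → ℕ), #F = c ∧ ∀ g : ℕ → ℕ, ∃ f ∈ F, EvMaj g f}

/-- `B_M`: the ideal of meager downward-closed subsets of `[ω]^ω`. -/
def BM : Set (Set (Set ℕ)) := {X : Set (Set ℕ) | X ⊆ InfSets ∧ DownClosed X ∧ MeagerSet X}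

/-- `add(B_M)`. -/
noncomputable def addBM : Cardinal :=
  sInf {c : Cardinal | ∃ S : Set (Set (Set ℕ)), S ⊆ BM ∧ #S = c ∧ ⋃₀ S ∉ BM}

/-- `cov(B_M)`. -/
noncomputable def covBM : Cardinal :=
  sInf {c : Cardinal | ∃ S : Set (Set (Set ℕ)), S ⊆ BM ∧ #S = c ∧
    {x : Set ℕ | x.Infinite ∧ xᶜ.Infinite} ⊆ ⋃₀ S}

/-- `unif(B_M)`. -/
noncomputable def unifBM : Cardinal :=
  sInf {c : Cardinal | ∃ S : Set (Set ℕ), (∀ x ∈ S, x.Infinite ∧ xᶜ.Infinite) ∧ #S = c ∧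
    ∀ X ∈ BM, ¬ S ⊆ X}

/-- `cof(B_M)`. -/
noncomputable def cofBM : Cardinal :=
  sInf {c : Cardinal | ∃ C : Set (Set (Set ℕ)), C ⊆ BM ∧ #C = c ∧
    ∀ X ∈ BM, ∃ Y ∈ C, X ⊆ Y}

/-- `X ⊆ [ω]^ω` is dense: every infinite `A` has an infinite subset `B ∈ X`. -/
def DenseM (X : Set (Set ℕ)) : Prop :=
  ∀ A : Set ℕ, A.Infinite → ∃ B ⊆ A, B.Infinite ∧ B ∈ X

/-- 𝔤′: the least number of non-meager downward-closed ideals on ω with empty intersection. -/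
noncomputable def gNum' : Cardinal :=
  sInf {c : Cardinal | ∃ S : Set (Set (Set ℕ)),
    (∀ X ∈ S, X ⊆ InfSets ∧ DownClosed X ∧ (∀ x ∈ X, ∀ y ∈ X, x ∪ y ∈ X) ∧ ¬ MeagerSet X) ∧
    #S = c ∧ InfSets ∩ ⋂₀ S = ∅}

/-- The splitting number 𝔰. -/
noncomputable def sNum : Cardinal :=
  sInf {c : Cardinal | ∃ S : Set (Set ℕ), #S = c ∧
    ∀ x : Set ℕ, x.Infinite → ∃ y ∈ S, (x ∩ y).Infinite ∧ (x \ y).Infinite}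

namespace Stmt9Aux

def Cyl (τ : ℕ → Bool) (l : ℕ) : Set (ℕ → Bool) := {f | ∀ j < l, f j = τ j}

lemma isOpen_cyl (τ : ℕ → Bool) (l : ℕ) : IsOpen (Cyl τ l) := by
  have h : Cyl τ l = ⋂ j ∈ Finset.range l, ((fun f : ℕ → Bool => f j) ⁻¹' {τ j}) := by
    ext f; simp [Cyl]
  rw [h]
  exact isOpen_biInter_finset fun j _ =>
    (isOpen_discrete _).preimage (continuous_apply j)

lemma avoid (T : Set (ℕ → Bool)) (hT : IsNowhereDense T) (σ : ℕ → Bool) (l : ℕ) :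
    ∃ l', l ≤ l' ∧ ∃ τ : ℕ → Bool, (∀ j < l, τ j = σ j) ∧
      ∀ f ∈ Cyl τ l', f ∉ closure T := by
  have hne : ¬ (Cyl σ l ⊆ closure T) := by
    intro hsub
    have h1 : Cyl σ l ⊆ interior (closure T) :=
      ((isOpen_cyl σ l).subset_interior_iff).2 hsub
    rw [hT] at h1
    exact h1 (fun j hj => rfl)
  obtain ⟨τ, hτC, hτT⟩ := not_subset.mp hne
  obtain ⟨I, u, hu, hsub⟩ := isOpen_pi_iff.mp isClosed_closure.isOpen_compl τ hτT
  refine ⟨max l ((I.sup id) + 1), le_max_left _ _, τ, fun j hj => hτC j hj, ?_⟩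
  intro f hf hfT
  refine hsub ?_ hfT
  intro i hi
  have hilt : i < max l ((I.sup id) + 1) :=
    lt_of_lt_of_le (Nat.lt_succ_of_le (Finset.le_sup (f := id) hi)) (le_max_right _ _)
  rw [hf i hilt]
  exact (hu i hi).2

lemma nwd_union {Y : Type*} [TopologicalSpace Y] {s t : Set Y}
    (hs : IsNowhereDense s) (ht : IsNowhereDense t) : IsNowhereDense (s ∪ t) := by
  rw [IsNowhereDense, closure_union, Set.eq_empty_iff_forall_notMem]
  intro p hp
  set U := interior (closure s ∪ closure t) with hU
  have hUo : IsOpen U := isOpen_interior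
  have h1 : U \ closure s ⊆ interior (closure t) := by
    apply (hUo.sdiff isClosed_closure).subset_interior_iff.2
    intro q hq
    rcases interior_subset hq.1 with h | h
    · exact absurd h hq.2
    · exact h
  rw [ht] at h1
  have h2 : U ⊆ closure s := by
    intro q hq
    by_contra hq2
    exact h1 ⟨hq, hq2⟩
  have h3 : U ⊆ interior (closure s) := hUo.subset_interior_iff.2 h2
  rw [hs] at h3
  exact h3 hp

lemma nwd_biUnion {Y : Type*} [TopologicalSpace Y] {T : ℕ → Set Y}
    (hT : ∀ m, IsNowhereDense (T m)) (n : ℕ) :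
    IsNowhereDense (⋃ m ∈ Finset.range (n+1), closure (T m)) := by
  induction n with
  | zero => simpa using (hT 0).closure
  | succ n ih =>
      have h : (⋃ m ∈ Finset.range (n+2), closure (T m)) =
          (⋃ m ∈ Finset.range (n+1), closure (T m)) ∪ closure (T (n+1)) := by
        rw [Finset.range_add_one]
        simp [Set.union_comm]
      rw [h]
      exact nwd_union ih (hT _).closure

lemma stage (T : ℕ → Set (ℕ → Bool)) (hT : ∀ m, IsNowhereDense (T m)) (l n : ℕ) :
    ∃ L, l < L ∧ ∀ s : Fin l → Bool, ∃ τ : ℕ → Bool,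
      (∀ (j : ℕ) (hj : j < l), τ j = s ⟨j, hj⟩) ∧
      (∃ j, l ≤ j ∧ j < L ∧ τ j = true) ∧
      ∀ f : ℕ → Bool, (∀ j < L, f j = τ j) → ∀ m ≤ n, f ∉ T m := by
  classical
  set NW := ⋃ m ∈ Finset.range (n+1), closure (T m) with hNW
  have hNWnwd : IsNowhereDense NW := nwd_biUnion hT n
  have key : ∀ s : Fin l → Bool, ∃ l', l ≤ l' ∧ ∃ τ : ℕ → Bool,
      (∀ j < l, τ j = (fun j => if h : j < l then s ⟨j, h⟩ else false) j) ∧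
      ∀ f ∈ Cyl τ l', f ∉ closure NW := fun s => avoid NW hNWnwd _ l
  choose l' hl' τ' hpre hav using key
  refine ⟨(Finset.univ.sup l') + 1, ?_, ?_⟩
  · have h1 : l' (fun _ => false) ≤ Finset.univ.sup l' := Finset.le_sup (Finset.mem_univ _)
    have h2 := hl' (fun _ => false)
    omega
  · intro s
    have hls : l ≤ l' s := hl' s
    have hsup : l' s ≤ Finset.univ.sup l' := Finset.le_sup (Finset.mem_univ _)
    refine ⟨Function.update (τ' s) (l' s) true, ?_, ?_, ?_⟩
    · intro j hj
      have hne : j ≠ l' s := by omega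
      rw [Function.update_of_ne hne]
      have := hpre s j hj
      simpa [dif_pos hj] using this
    · exact ⟨l' s, hls, by omega, Function.update_self _ _ _⟩
    · intro f hf m hm hfT
      have hfc : f ∈ Cyl (τ' s) (l' s) := by
        intro j hj
        rw [hf j (by omega), Function.update_of_ne (by omega)]
      refine hav s f hfc ?_
      apply subset_closure
      rw [hNW]
      exact Set.mem_biUnion (Finset.mem_range.mpr (by omega)) (subset_closure hfT)

end Stmt9Aux

lemma lemmaA (X : Set (Set ℕ)) (hXD : DownClosed X) (hXM : MeagerSet X) :
    ∃ P : IntervalPartition, ∀ x ∈ X, {n : ℕ | P.I n ⊆ x}.Finite := by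
  classical
  obtain ⟨S, hSnwd, hScnt, hSsub⟩ := isMeagre_iff_countable_union_isNowhereDense.mp hXM
  rcases S.eq_empty_or_nonempty with rfl | hSne
  · refine ⟨⟨id, rfl, strictMono_id⟩, fun x hx => ?_⟩
    exfalso
    have h := hSsub ⟨x, hx, rfl⟩
    simpa using h
  obtain ⟨T, rfl⟩ := hScnt.exists_eq_range hSne
  have hT : ∀ m, IsNowhereDense (T m) := fun m => hSnwd _ ⟨m, rfl⟩
  choose L hLlt hLs using Stmt9Aux.stage T hT
  let e : ℕ → ℕ := fun n => Nat.rec 0 (fun n ih => L ih n) n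
  have he0 : e 0 = 0 := rfl
  have hes : ∀ n, e (n+1) = L (e n) n := fun n => rfl
  have hemono : StrictMono e := strictMono_nat_of_lt_succ (fun n => by rw [hes]; exact hLlt (e n) n)
  have hege : ∀ m, m ≤ e m := fun m => hemono.le_apply
  refine ⟨⟨e, he0, hemono⟩, fun x hx => ?_⟩
  set P : IntervalPartition := ⟨e, he0, hemono⟩ with hPdef
  by_contra hinf
  have hJ : {n : ℕ | P.I n ⊆ x}.Infinite := hinf
  choose nxt hnxtJ hnxtlt using fun N => hJ.exists_gt N
  let nk : ℕ → ℕ := fun k => Nat.rec (nxt 0) (fun _ ih => nxt ih) k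
  have hnkI : ∀ k, P.I (nk k) ⊆ x := by
    intro k
    induction k with
    | zero => exact hnxtJ 0
    | succ k ih => exact hnxtJ (nk k)
  have hnkmono : StrictMono nk := strictMono_nat_of_lt_succ (fun k => hnxtlt (nk k))
  have hnkge : ∀ k, k ≤ nk k := fun k => hnkmono.le_apply
  choose τf hτpre hτtrue hτav using hLs
  let τat : ℕ → (ℕ → Bool) → (ℕ → Bool) := fun m y => τf (e m) m (fun i => y i.1)
  let z : ℕ → ℕ → Bool := fun k => Nat.rec (fun _ => false)
    (fun k ih => fun j => if j < e (nk k + 1) then τat (nk k) ih j else false) k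
  have hzs : ∀ k, z (k+1) = fun j => if j < e (nk k + 1) then τat (nk k) (z k) j else false :=
    fun k => rfl
  have hnksucc : ∀ k, nk k + 1 ≤ nk (k+1) := fun k => hnkmono (Nat.lt_succ_self k)
  have hstab : ∀ k, ∀ j < e (nk k), z (k+1) j = z k j := by
    intro k j hj
    rw [hzs k]
    have hj1 : j < e (nk k + 1) := lt_of_lt_of_le hj (hemono.monotone (Nat.le_succ _))
    simp only [if_pos hj1]
    exact hτpre (e (nk k)) (nk k) _ j hj
  have hstab2 : ∀ k k', k ≤ k' → ∀ j < e (nk k), z k' j = z k j := by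
    intro k k' hkk'
    induction k' with
    | zero =>
        intro j hj
        have : k = 0 := Nat.le_zero.mp hkk'
        rw [this]
    | succ k' ih =>
        intro j hj
        rcases Nat.lt_or_ge k (k'+1) with h | h
        · have hk' : k ≤ k' := Nat.lt_succ_iff.mp h
          have hj' : j < e (nk k') :=
            lt_of_lt_of_le hj (hemono.monotone (hnkmono.monotone hk'))
          rw [hstab k' j hj', ih hk' j hj]
        · have : k = k' + 1 := le_antisymm hkk' h
          rw [this]
  let y : ℕ → Bool := fun j => z (j+1) j
  have hjlt : ∀ j, j < e (nk (j+1)) := fun j =>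
    lt_of_lt_of_le (Nat.lt_succ_self j) (le_trans (hnkge (j+1)) (hege (nk (j+1))))
  have hyz : ∀ k, ∀ j < e (nk k), y j = z k j := by
    intro k j hj
    show z (j+1) j = z k j
    rcases le_total k (j+1) with h | h
    · exact hstab2 k (j+1) h j hj
    · exact (hstab2 (j+1) k h j (hjlt j)).symm
  have hyτ : ∀ k, ∀ j < e (nk k + 1), y j = τat (nk k) (z k) j := by
    intro k j hj
    have hj2 : j < e (nk (k+1)) := lt_of_lt_of_le hj (hemono.monotone (hnksucc k))
    rw [hyz (k+1) j hj2, hzs k]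
    simp only [if_pos hj]
  have havoid : ∀ m, y ∉ T m := by
    intro m
    have hmk : m ≤ nk m := hnkge m
    have := hτav (e (nk m)) (nk m) (fun i => z m i.1) y ?_ m hmk
    · exact this
    · intro j hj
      refine hyτ m j ?_
      rw [hes (nk m)]
      exact hj
  have hytrue : ∀ k, ∃ j, e (nk k) ≤ j ∧ j < e (nk k + 1) ∧ y j = true := by
    intro k
    obtain ⟨j, hj1, hj2, hj3⟩ := hτtrue (e (nk k)) (nk k) (fun i => z k i.1)
    have hj2' : j < e (nk k + 1) := by rw [hes (nk k)]; exact hj2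
    exact ⟨j, hj1, hj2', by rw [hyτ k j hj2']; exact hj3⟩
  have hzx : ∀ k j, z k j = true → j ∈ x := by
    intro k
    induction k with
    | zero => intro j h; simp at h
    | succ k ih =>
        intro j h
        have h' : (if j < e (nk k + 1) then τat (nk k) (z k) j else false) = true := h
        by_cases hlt : j < e (nk k + 1)
        · rcases Nat.lt_or_ge j (e (nk k)) with h2 | h2
          · rw [if_pos hlt] at h'
            have h2' : τat (nk k) (z k) j = z k j :=
              hτpre (e (nk k)) (nk k) (fun i => z k i.1) j h2
            rw [h2'] at h'
            exact ih j h'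
          · exact hnkI k ⟨h2, hlt⟩
        · rw [if_neg hlt] at h'
          exact absurd h' (by simp)
  have hyx : ∀ j, y j = true → j ∈ x := fun j h => hzx (j+1) j h
  set yset : Set ℕ := {j | y j = true} with hyset
  have hchi : chi yset = y := by
    funext n
    simp only [chi]
    rcases Bool.eq_false_or_eq_true (y n) with h | h
    · have hm : n ∈ yset := h
      rw [h]
      exact @decide_eq_true _ (Classical.dec _) hm
    · have hm : n ∉ yset := by
        intro hc
        have hc' : y n = true := hc
        rw [h] at hc'
        simp at hc'
      rw [h]
      exact @decide_eq_false _ (Classical.dec _) hm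
  have hyinf : yset.Infinite := by
    apply Set.infinite_of_forall_exists_gt
    intro a
    obtain ⟨j, hj1, hj2, hj3⟩ := hytrue (a+1)
    refine ⟨j, hj3, ?_⟩
    have : a + 1 ≤ e (nk (a+1)) := le_trans (hnkge (a+1)) (hege _)
    omega
  have hysub : yset ⊆ x := fun j hj => hyx j hj
  have hymem : yset ∈ X := by
    apply hXD x hx yset hyinf
    rw [Set.diff_eq_empty.mpr hysub]
    exact Set.finite_empty
  have hmem : chi yset ∈ ⋃₀ Set.range T := hSsub ⟨yset, hymem, rfl⟩
  rw [Set.sUnion_range] at hmem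
  obtain ⟨m, hm⟩ := Set.mem_iUnion.mp hmem
  rw [hchi] at hm
  exact havoid m hm

lemma e_ge (P : IntervalPartition) (m : ℕ) : m ≤ P.e m :=
  P.mono.le_apply

lemma idx_le (P : IntervalPartition) (k : ℕ) : idx P k ≤ k :=
  Nat.findGreatest_le k

lemma e_idx_le (P : IntervalPartition) (k : ℕ) : P.e (idx P k) ≤ k :=
  Nat.findGreatest_spec (P := fun n => P.e n ≤ k) (m := 0) (Nat.zero_le k)
    (by show P.e 0 ≤ k; rw [P.zero]; exact Nat.zero_le k)

lemma lt_e_idx_succ (P : IntervalPartition) (k : ℕ) : k < P.e (idx P k + 1) := by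
  by_contra h
  push_neg at h
  have h2 : idx P k + 1 ≤ k := le_trans (e_ge P _) h
  exact Nat.findGreatest_is_greatest (Nat.lt_succ_self _) h2 h

/-- 𝔡 ≤ cov(B_M): any family of meager downward-closed subsets of `[ω]^ω` covering all
infinite co-infinite subsets of ω has cardinality at least 𝔡. -/
theorem stmt9 (ι : Type) (X : ι → Set (Set ℕ))
    (hX : ∀ i, X i ⊆ InfSets ∧ DownClosed (X i) ∧ MeagerSet (X i))
    (hcover : {x : Set ℕ | x.Infinite ∧ xᶜ.Infinite} ⊆ ⋃ i, X i) :
    dNum ≤ #ι := by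
  classical
  have hPex : ∀ i, ∃ P : IntervalPartition, ∀ x ∈ X i, {n : ℕ | P.I n ⊆ x}.Finite :=
    fun i => lemmaA (X i) (hX i).2.1 (hX i).2.2
  choose P hP using hPex
  set h3 : ι × ι × ι → (ℕ → ℕ) := fun p k =>
    max ((P p.1).e (k+2)) (max ((P p.2.1).e (k+2)) ((P p.2.2).e (k+2))) with hh3
  set F : Set (ℕ → ℕ) := Set.range h3 with hFdef
  have hdom : ∀ g : ℕ → ℕ, ∃ f ∈ F, EvMaj g f := by
    intro g
    set G : ℕ → ℕ := fun n => (Finset.range (n+1)).sup g + n + 1 with hG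
    have hGmono : Monotone G := by
      intro a b hab
      have h1 : (Finset.range (a+1)).sup g ≤ (Finset.range (b+1)).sup g :=
        Finset.sup_mono (by intro u hu; simp at hu ⊢; omega)
      simp only [hG]
      omega
    have hGgt : ∀ n, n < G n := fun n => by simp only [hG]; omega
    have hgG : ∀ n, g n ≤ G n := fun n => by
      have h1 : g n ≤ (Finset.range (n+1)).sup g := Finset.le_sup (by simp)
      simp only [hG]
      omega
    set t : ℕ → ℕ := fun m => G^[m] 0 with ht
    have hts : ∀ m, t (m+1) = G (t m) := fun m => Function.iterate_succ_apply' G m 0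
    have htmono : StrictMono t := strictMono_nat_of_lt_succ (fun m => by rw [hts]; exact hGgt _)
    have htge : ∀ m, m ≤ t m := fun m => htmono.le_apply
    set Q : IntervalPartition := ⟨t, rfl, htmono⟩ with hQ
    set xr : ℕ → Set ℕ := fun r => ⋃ n : ℕ, Set.Ico (t (3*n + r)) (t (3*n + r + 2)) with hxr
    have hxrblock : ∀ r m, m % 3 = r → Set.Ico (t m) (t (m+2)) ⊆ xr r := by
      intro r m hm a ha
      have hm3 : m = 3 * (m / 3) + r := by omega
      refine Set.mem_iUnion.mpr ⟨m / 3, ?_⟩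
      rw [← hm3]
      exact ha
    have hxrmem : ∀ r, (xr r).Infinite ∧ (xr r)ᶜ.Infinite := by
      intro r
      constructor
      · apply Set.infinite_of_forall_exists_gt
        intro a
        refine ⟨t (3*(a+1) + r), Set.mem_iUnion.mpr ⟨a+1, ⟨le_refl _, htmono (by omega)⟩⟩, ?_⟩
        have := htge (3*(a+1)+r)
        omega
      · apply Set.infinite_of_forall_exists_gt
        intro a
        refine ⟨t (3*(a+1) + r + 2), ?_, ?_⟩
        · intro hmem
          obtain ⟨n', hn'⟩ := Set.mem_iUnion.mp hmem
          have h1 : 3*n' + r ≤ 3*(a+1)+r+2 := htmono.le_iff_le.mp hn'.1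
          have h2 : 3*(a+1)+r+2 < 3*n' + r + 2 := htmono.lt_iff_lt.mp hn'.2
          omega
        · have := htge (3*(a+1)+r+2)
          omega
    have hxcov : ∀ r : ℕ, ∃ i, xr r ∈ X i := by
      intro r
      exact Set.mem_iUnion.mp (hcover (hxrmem r))
    obtain ⟨i0, hi0⟩ := hxcov 0
    obtain ⟨i1, hi1⟩ := hxcov 1
    obtain ⟨i2, hi2⟩ := hxcov 2
    set f : ℕ → ℕ := h3 (i0, i1, i2) with hf
    refine ⟨f, ⟨(i0,i1,i2), rfl⟩, ?_⟩
    have hfle0 : ∀ k, (P i0).e (k+2) ≤ f k := fun k => le_max_left _ _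
    have hfle1 : ∀ k, (P i1).e (k+2) ≤ f k := fun k =>
      le_trans (le_max_left _ _) (le_max_right _ _)
    have hfle2 : ∀ k, (P i2).e (k+2) ≤ f k := fun k =>
      le_trans (le_max_right _ _) (le_max_right _ _)
    have key : ∀ᶠ k in Filter.atTop, G k ≤ f k := by
      by_contra hbad
      have hfreq : ∃ᶠ k in Filter.atTop, f k < G k :=
        (Filter.not_eventually.mp hbad).mono (fun k hk => lt_of_not_ge hk)
      have hfin : ∀ (r : ℕ) (i : ι), xr r ∈ X i → (∀ k, (P i).e (k+2) ≤ f k) →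
          ∃ b, ∀ k, f k < G k → idx Q k % 3 = r → k < b := by
        intro r i hxi hfle
        have hSfin : {n | (P i).I n ⊆ xr r}.Finite := hP i (xr r) hxi
        obtain ⟨b, hb⟩ := hSfin.bddAbove
        refine ⟨(P i).e (b+1) + 1, ?_⟩
        intro k hk hkr
        set ν := idx (P i) k + 1 with hν
        have h1 : k < (P i).e ν := lt_e_idx_succ (P i) k
        have h2 : (P i).e (ν+1) ≤ (P i).e (k+2) := by
          apply (P i).mono.monotone
          have := idx_le (P i) k
          omega
        have h3' : (P i).e (ν+1) ≤ f k := le_trans h2 (hfle k)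
        set m := idx Q k with hm
        have hq1 : t m ≤ k := e_idx_le Q k
        have hq2 : k < t (m+1) := lt_e_idx_succ Q k
        have hq3 : G k ≤ t (m+2) := by
          have : G k ≤ G (t (m+1)) := hGmono (le_of_lt hq2)
          rw [← hts (m+1)] at this
          exact this
        have hsub : Set.Ico ((P i).e ν) ((P i).e (ν+1)) ⊆ Set.Ico (t m) (t (m+2)) := by
          intro a ha
          rcases ha with ⟨ha1, ha2⟩
          exact ⟨by omega, by omega⟩
        have hνS : ν ∈ {n | (P i).I n ⊆ xr r} :=
          subset_trans hsub (hxrblock r m hkr)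
        have hνb : ν ≤ b := hb hνS
        have h4 : (P i).e ν ≤ (P i).e (b+1) := (P i).mono.monotone (by omega)
        omega
      obtain ⟨b0, hb0⟩ := hfin 0 i0 hi0 hfle0
      obtain ⟨b1, hb1⟩ := hfin 1 i1 hi1 hfle1
      obtain ⟨b2, hb2⟩ := hfin 2 i2 hi2 hfle2
      obtain ⟨k, hk1, hk2⟩ := Filter.frequently_atTop.mp hfreq (max b0 (max b1 b2))
      have hr3 : idx Q k % 3 = 0 ∨ idx Q k % 3 = 1 ∨ idx Q k % 3 = 2 := by omega
      rcases hr3 with h | h | h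
      · have := hb0 k hk2 h; omega
      · have := hb1 k hk2 h; omega
      · have := hb2 k hk2 h; omega
    exact key.mono (fun k hk => le_trans (hgG k) hk)
  have hdle : dNum ≤ #F := csInf_le ⟨0, fun c _ => zero_le⟩ ⟨F, rfl, hdom⟩
  have hFle : #F ≤ #(ι × ι × ι) := Cardinal.mk_range_le
  rcases lt_or_ge (#ι) Cardinal.aleph0 with hlt | hge
  · exfalso
    have hfinι : Finite ι := Cardinal.mk_lt_aleph0_iff.mp hlt
    have hFfin : F.Finite := Set.finite_range h3
    obtain ⟨f0, hf0, hEv⟩ := hdom (fun k => (hFfin.toFinset.sup (fun f => f k)) + 1)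
    obtain ⟨k, hk⟩ := hEv.exists
    have hle : f0 k ≤ hFfin.toFinset.sup (fun f => f k) :=
      Finset.le_sup (f := fun f => f k) (hFfin.mem_toFinset.mpr hf0)
    have hk' : hFfin.toFinset.sup (fun f => f k) + 1 ≤ f0 k := hk
    exact Nat.not_succ_le_self _ (hk'.trans hle)
  · have h2 : #(ι × ι) = #ι :=
      (Cardinal.mul_def ι ι).symm.trans (Cardinal.mul_eq_self hge)
    have hprod : #(ι × ι × ι) = #ι := by
      calc #(ι × ι × ι) = #ι * #(ι × ι) := (Cardinal.mul_def _ _).symm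
        _ = #ι * #ι := by rw [h2]
        _ = #ι := Cardinal.mul_eq_self hge
    calc dNum ≤ #F := hdle
      _ ≤ #(ι × ι × ι) := hFle
      _ = #ι := hprod
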